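/- Let m ≥ 2, let τ ∈ S_m be cluster-free, and suppose that the ratios |S_{n+1}(τ)|/|S_n(τ)| converge as n → ∞ to a limit L > 0. Let {k_n} be any sequence with 1 ≤ k_n ≤ n-l+1. Then lim_{n→∞} |A^{(n)}_{l;k_n} ∩ S_n(τ)| / |S_n(τ)| = l!/L^{l-1} if 2 ≤ l < m, and lim_{n→∞} |A^{(n)}_{l;k_n} ∩ S_n(τ)| / |S_n(τ)| = (m! - 1)/L^{m-1} if l = m. (Here one uses that |S_l(τ)| = l! when l < m and |S_m(τ)| = m! - 1.) -/
import Mathlib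

open Filter

def Contains {n m : ℕ} (σ : Fin n → Fin n) (τ : Fin m → Fin m) : Prop :=
  ∃ f : Fin m → Fin n, StrictMono f ∧ ∀ j k : Fin m, σ (f j) < σ (f k) ↔ τ j < τ k

def Avoids {n m : ℕ} (σ : Fin n → Fin n) (τ : Fin m → Fin m) : Prop :=
  ¬ Contains σ τ

def AvoidSet (n : ℕ) {m : ℕ} (τ : Equiv.Perm (Fin m)) : Set (Equiv.Perm (Fin n)) :=
  {σ : Equiv.Perm (Fin n) | Avoids ⇑σ ⇑τ}

def ClusterAt {n : ℕ} (l k a : ℕ) (σ : Equiv.Perm (Fin n)) : Prop :=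
  (Finset.univ.filter fun i : Fin n => a ≤ (i : ℕ) + 1 ∧ (i : ℕ) + 1 < a + l).image
      (fun i => (σ i : ℕ) + 1) = Finset.Ico k (k + l)

def ClusterEvent (n l k : ℕ) : Set (Equiv.Perm (Fin n)) :=
  {σ : Equiv.Perm (Fin n) | ∃ a : ℕ, 1 ≤ a ∧ a ≤ n - l + 1 ∧ ClusterAt l k a σ}

def ClusterFree {m : ℕ} (τ : Equiv.Perm (Fin m)) : Prop :=
  ∀ l a k : ℕ, 2 ≤ l → l ≤ m - 1 → 1 ≤ a → a + l ≤ m + 1 → ¬ ClusterAt l k a τ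

def ContainsTightly12 {m : ℕ} (τ : Equiv.Perm (Fin m)) : Prop :=
  ∃ i j : Fin m, (j : ℕ) = (i : ℕ) + 1 ∧ (τ j : ℕ) = (τ i : ℕ) + 1

def ContainsTightly21 {m : ℕ} (τ : Equiv.Perm (Fin m)) : Prop :=
  ∃ i j : Fin m, (j : ℕ) = (i : ℕ) + 1 ∧ (τ i : ℕ) = (τ j : ℕ) + 1

def perm123 : Equiv.Perm (Fin 3) := Equiv.refl (Fin 3)

def perm321 : Equiv.Perm (Fin 3) :=
  ⟨![2, 1, 0], ![2, 1, 0], by intro x; fin_cases x <;> rfl, by intro x; fin_cases x <;> rfl⟩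

def p2413 : Equiv.Perm (Fin 4) :=
  ⟨![1, 3, 0, 2], ![2, 0, 3, 1], by intro x; fin_cases x <;> rfl, by intro x; fin_cases x <;> rfl⟩

def p3142 : Equiv.Perm (Fin 4) :=
  ⟨![2, 0, 3, 1], ![1, 3, 0, 2], by intro x; fin_cases x <;> rfl, by intro x; fin_cases x <;> rfl⟩

def SepSet (n : ℕ) : Set (Equiv.Perm (Fin n)) :=
  {σ : Equiv.Perm (Fin n) | Avoids ⇑σ ⇑p2413 ∧ Avoids ⇑σ ⇑p3142}



namespace AuxCluster

/-- collapse the window `[x, x+l)` to the single value `x`, shifting higher values down. -/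
def col (x l v : ℕ) : ℕ := if v < x then v else if v < x + l then x else v - (l - 1)

/-- expand: inverse of `col` off the window. -/
def expd (x l v : ℕ) : ℕ := if v ≤ x then v else v + (l - 1)

lemma col_lt_iff {x l u v : ℕ} (hl : 1 ≤ l)
    (h : ¬((x ≤ u ∧ u < x + l) ∧ (x ≤ v ∧ v < x + l))) :
    col x l u < col x l v ↔ u < v := by
  unfold col; split_ifs <;> omega

lemma expd_lt {x l u v : ℕ} (h : u < v) : expd x l u < expd x l v := by
  unfold expd; split_ifs <;> omega

lemma col_expd {x l v : ℕ} (hl : 1 ≤ l) (hv : v ≠ x) : col x l (expd x l v) = v := by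
  unfold col expd; split_ifs <;> omega

lemma expd_col {x l v : ℕ} (hl : 1 ≤ l) (h : ¬(x ≤ v ∧ v < x + l)) :
    expd x l (col x l v) = v := by
  unfold col expd; split_ifs <;> omega

lemma col_bound {x l v n : ℕ} (hl : 1 ≤ l) (hv : v < n) (hx : x + l ≤ n) :
    col x l v < n - l + 1 := by
  unfold col; split_ifs <;> omega

lemma expd_bound {x l v n : ℕ} (hl : 1 ≤ l) (hln : l ≤ n) (hv : v < n - l + 1) :
    expd x l v < n := by
  unfold expd; split_ifs <;> omega

lemma col_eq_self_iff {x l v : ℕ} (hl : 1 ≤ l) : (x ≤ v ∧ v < x + l) ↔ col x l v = x := by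
  unfold col; split_ifs <;> omega

lemma expd_mem_iff {x l v : ℕ} (hl : 1 ≤ l) : (x ≤ expd x l v ∧ expd x l v < x + l) ↔ v = x := by
  unfold expd; split_ifs <;> omega

lemma col_inj {x l u v : ℕ} (hl : 1 ≤ l) (hu : ¬(x ≤ u ∧ u < x + l))
    (hv : ¬(x ≤ v ∧ v < x + l)) (h : col x l u = col x l v) : u = v := by
  unfold col at h; split_ifs at h <;> omega

lemma expd_inj {x l u v : ℕ} (h : expd x l u = expd x l v) : u = v := by
  unfold expd at h; split_ifs at h <;> omega

/-- a permutation of `Fin n` as a function `ℕ → ℕ`. -/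
def pf {n : ℕ} (σ : Equiv.Perm (Fin n)) : ℕ → ℕ := fun p => if h : p < n then σ ⟨p, h⟩ else p

lemma pf_lt {n : ℕ} (σ : Equiv.Perm (Fin n)) {p : ℕ} (hp : p < n) : pf σ p < n := by
  rw [pf, dif_pos hp]; exact (σ ⟨p, hp⟩).2

lemma pf_inj {n : ℕ} (σ : Equiv.Perm (Fin n)) {p q : ℕ} (hp : p < n) (hq : q < n)
    (h : pf σ p = pf σ q) : p = q := by
  rw [pf, dif_pos hp, pf, dif_pos hq] at h
  have := σ.injective (Fin.ext h)
  exact congrArg Fin.val this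

lemma pf_coe {n : ℕ} (σ : Equiv.Perm (Fin n)) (i : Fin n) : pf σ (i : ℕ) = (σ i : ℕ) := by
  rw [pf, dif_pos i.2]

noncomputable def mkPerm (n : ℕ) (f : ℕ → ℕ) : Equiv.Perm (Fin n) :=
  if h : (∀ i < n, f i < n) ∧ (∀ i < n, ∀ j < n, f i = f j → i = j) then
    Equiv.ofBijective (fun i => ⟨f i, h.1 i i.2⟩)
      (Finite.injective_iff_bijective.1
        (fun i j hij => Fin.ext (h.2 i i.2 j j.2 (congrArg Fin.val hij))))
  else 1

lemma mkPerm_apply {n : ℕ} {f : ℕ → ℕ} (h1 : ∀ i < n, f i < n)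
    (h2 : ∀ i < n, ∀ j < n, f i = f j → i = j) (i : Fin n) :
    (mkPerm n f i : ℕ) = f (i : ℕ) := by
  rw [mkPerm, dif_pos ⟨h1, h2⟩]; rfl



def BlockAt (n a0 k0 l : ℕ) (σ : Equiv.Perm (Fin n)) : Prop :=
  ∀ p, p < n → ((a0 ≤ p ∧ p < a0 + l) ↔ (k0 ≤ pf σ p ∧ pf σ p < k0 + l))

lemma clusterAt_iff_blockAt {n l a0 k0 : ℕ} (σ : Equiv.Perm (Fin n))
    (hl : 1 ≤ l) (ha : a0 + l ≤ n) (hk : k0 + l ≤ n) :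
    ClusterAt l (k0 + 1) (a0 + 1) σ ↔ BlockAt n a0 k0 l σ := by
  constructor
  · intro h p hp
    constructor
    · intro hw
      have hmem : (σ ⟨p, hp⟩ : ℕ) + 1 ∈
          (Finset.univ.filter fun i : Fin n =>
            a0 + 1 ≤ (i : ℕ) + 1 ∧ (i : ℕ) + 1 < a0 + 1 + l).image (fun i => (σ i : ℕ) + 1) := by
        exact Finset.mem_image_of_mem _ (by simp [Finset.mem_filter]; omega)
      rw [h, Finset.mem_Ico] at hmem
      rw [pf, dif_pos hp]
      omega
    · intro hv
      rw [pf, dif_pos hp] at hv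
      have hmem : (σ ⟨p, hp⟩ : ℕ) + 1 ∈ Finset.Ico (k0 + 1) (k0 + 1 + l) := by
        rw [Finset.mem_Ico]; omega
      rw [← h, Finset.mem_image] at hmem
      obtain ⟨i, hi, hival⟩ := hmem
      rw [Finset.mem_filter] at hi
      have : i = ⟨p, hp⟩ := σ.injective (Fin.ext (by omega))
      rw [this] at hi
      simp at hi
      omega
  · intro hB
    unfold ClusterAt
    ext v
    simp only [Finset.mem_image, Finset.mem_filter, Finset.mem_univ, true_and, Finset.mem_Ico]
    constructor
    · rintro ⟨i, ⟨hi1, hi2⟩, rfl⟩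
      have := (hB i i.2).1 (by omega)
      rw [pf_coe] at this
      omega
    · intro hv
      have hvn : v - 1 < n := by omega
      refine ⟨σ.symm ⟨v - 1, hvn⟩, ?_, ?_⟩
      · have := (hB (σ.symm ⟨v - 1, hvn⟩ : ℕ) (σ.symm ⟨v - 1, hvn⟩).2).2 ?_
        · omega
        · rw [pf_coe, Equiv.apply_symm_apply]; simp; omega
      · rw [Equiv.apply_symm_apply]; simp; omega

lemma blockAt_unique {n l a0 a0' k0 : ℕ} (σ : Equiv.Perm (Fin n))
    (hl : 1 ≤ l) (ha : a0 + l ≤ n) (ha' : a0' + l ≤ n)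
    (h : BlockAt n a0 k0 l σ) (h' : BlockAt n a0' k0 l σ) : a0 = a0' := by
  have h1 := (h a0 (by omega)).1 (by omega)
  have h2 := (h' a0' (by omega)).1 (by omega)
  have h3 := (h' a0 (by omega)).2 h1
  have h4 := (h a0' (by omega)).2 h2
  omega

lemma convex_finset_eq_Icc (s : Finset ℕ) (hs : s.Nonempty)
    (hconv : ∀ x ∈ s, ∀ y ∈ s, ∀ z, x ≤ z → z ≤ y → z ∈ s) :
    s = Finset.Icc (s.min' hs) (s.max' hs) ∧ s.max' hs + 1 = s.min' hs + s.card := by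
  have he : s = Finset.Icc (s.min' hs) (s.max' hs) := by
    apply subset_antisymm
    · intro x hx
      rw [Finset.mem_Icc]
      exact ⟨s.min'_le x hx, s.le_max' x hx⟩
    · intro x hx
      rw [Finset.mem_Icc] at hx
      exact hconv _ (s.min'_mem hs) _ (s.max'_mem hs) x hx.1 hx.2
  refine ⟨he, ?_⟩
  have hc : s.card = (Finset.Icc (s.min' hs) (s.max' hs)).card := by rw [← he]
  rw [Nat.card_Icc] at hc
  have := s.min'_le _ (s.max'_mem hs)
  omega

noncomputable def betaOf {n : ℕ} (l a0 k0 : ℕ) (σ : Equiv.Perm (Fin n)) : Equiv.Perm (Fin l) :=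
  mkPerm l (fun i => pf σ (a0 + i) - k0)

noncomputable def sigOf {n : ℕ} (l a0 k0 : ℕ) (σ : Equiv.Perm (Fin n)) :
    Equiv.Perm (Fin (n - l + 1)) :=
  mkPerm (n - l + 1) (fun i => col k0 l (pf σ (expd a0 l i)))

section Transfer

variable {n l a0 k0 : ℕ} (σ : Equiv.Perm (Fin n))

lemma beta_cond1 (ha : a0 + l ≤ n) (hB : BlockAt n a0 k0 l σ) :
    ∀ i < l, pf σ (a0 + i) - k0 < l := by
  intro i hi
  have := (hB (a0 + i) (by omega)).1 (by omega)
  omega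

lemma beta_cond2 (ha : a0 + l ≤ n) (hB : BlockAt n a0 k0 l σ) :
    ∀ i < l, ∀ j < l, pf σ (a0 + i) - k0 = pf σ (a0 + j) - k0 → i = j := by
  intro i hi j hj h
  have h1 := (hB (a0 + i) (by omega)).1 (by omega)
  have h2 := (hB (a0 + j) (by omega)).1 (by omega)
  have : pf σ (a0 + i) = pf σ (a0 + j) := by omega
  have := pf_inj σ (by omega) (by omega) this
  omega

lemma betaOf_apply (ha : a0 + l ≤ n) (hB : BlockAt n a0 k0 l σ) (i : Fin l) :
    (betaOf l a0 k0 σ i : ℕ) = pf σ (a0 + i) - k0 :=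
  mkPerm_apply (beta_cond1 σ ha hB) (beta_cond2 σ ha hB) i

lemma betaOf_apply' (ha : a0 + l ≤ n) (hB : BlockAt n a0 k0 l σ) (i : Fin l) :
    k0 + (betaOf l a0 k0 σ i : ℕ) = pf σ (a0 + i) := by
  rw [betaOf_apply σ ha hB]
  have := (hB (a0 + i) (by omega)).1 (by omega)
  omega

lemma sig_cond1 (hl : 1 ≤ l) (hln : l ≤ n) (hk : k0 + l ≤ n) :
    ∀ i < n - l + 1, col k0 l (pf σ (expd a0 l i)) < n - l + 1 := by
  intro i hi
  exact col_bound hl (pf_lt σ (expd_bound hl hln hi)) hk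

lemma expd_window_iff (hl : 1 ≤ l) (i : ℕ) :
    (a0 ≤ expd a0 l i ∧ expd a0 l i < a0 + l) ↔ i = a0 := expd_mem_iff hl

lemma sig_cond2 (hl : 1 ≤ l) (hln : l ≤ n) (ha : a0 + l ≤ n) (hk : k0 + l ≤ n)
    (hB : BlockAt n a0 k0 l σ) :
    ∀ i < n - l + 1, ∀ j < n - l + 1,
      col k0 l (pf σ (expd a0 l i)) = col k0 l (pf σ (expd a0 l j)) → i = j := by
  intro i hi j hj h
  have hei : expd a0 l i < n := expd_bound hl hln hi
  have hej : expd a0 l j < n := expd_bound hl hln hj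
  by_cases hwi : k0 ≤ pf σ (expd a0 l i) ∧ pf σ (expd a0 l i) < k0 + l
  · have hpi : i = a0 := (expd_window_iff hl i).1 ((hB _ hei).2 hwi)
    by_cases hwj : k0 ≤ pf σ (expd a0 l j) ∧ pf σ (expd a0 l j) < k0 + l
    · exact hpi.trans ((expd_window_iff hl j).1 ((hB _ hej).2 hwj)).symm
    · exfalso
      have h1 : col k0 l (pf σ (expd a0 l i)) = k0 := ((col_eq_self_iff hl).1 hwi)
      have h2 : col k0 l (pf σ (expd a0 l j)) ≠ k0 := fun hc => hwj ((col_eq_self_iff hl).2 hc)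
      exact h2 (by omega)
  · by_cases hwj : k0 ≤ pf σ (expd a0 l j) ∧ pf σ (expd a0 l j) < k0 + l
    · exfalso
      have h1 : col k0 l (pf σ (expd a0 l j)) = k0 := ((col_eq_self_iff hl).1 hwj)
      have h2 : col k0 l (pf σ (expd a0 l i)) ≠ k0 := fun hc => hwi ((col_eq_self_iff hl).2 hc)
      exact h2 (by omega)
    · exact expd_inj (pf_inj σ hei hej (col_inj hl hwi hwj h))

lemma sigOf_apply (hl : 1 ≤ l) (hln : l ≤ n) (ha : a0 + l ≤ n) (hk : k0 + l ≤ n)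
    (hB : BlockAt n a0 k0 l σ) (i : Fin (n - l + 1)) :
    (sigOf l a0 k0 σ i : ℕ) = col k0 l (pf σ (expd a0 l i)) :=
  mkPerm_apply (sig_cond1 σ hl hln hk) (sig_cond2 σ hl hln ha hk hB) i

end Transfer
section Transfer2

variable {n l a0 k0 m : ℕ} (σ : Equiv.Perm (Fin n)) (τ : Equiv.Perm (Fin m))

lemma contains_of_beta (hl : 1 ≤ l) (ha : a0 + l ≤ n) (hB : BlockAt n a0 k0 l σ)
    (h : Contains ⇑(betaOf l a0 k0 σ) ⇑τ) : Contains ⇑σ ⇑τ := by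
  obtain ⟨f, hmono, hiff⟩ := h
  refine ⟨fun j => ⟨a0 + (f j : ℕ), by have := (f j).2; omega⟩, ?_, ?_⟩
  · intro j k hjk
    have := hmono hjk
    rw [Fin.lt_def] at this ⊢
    simpa using this
  · intro j k
    rw [← hiff j k]
    have key : ∀ j : Fin m, (σ ⟨a0 + (f j : ℕ), by have := (f j).2; omega⟩ : ℕ) =
        k0 + (betaOf l a0 k0 σ (f j) : ℕ) := by
      intro j
      rw [betaOf_apply' σ ha hB, pf, dif_pos]
    rw [Fin.lt_def, Fin.lt_def, key j, key k]
    omega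

lemma contains_of_sig (hl : 1 ≤ l) (hln : l ≤ n) (ha : a0 + l ≤ n) (hk : k0 + l ≤ n)
    (hB : BlockAt n a0 k0 l σ) (h : Contains ⇑(sigOf l a0 k0 σ) ⇑τ) : Contains ⇑σ ⇑τ := by
  obtain ⟨f, hmono, hiff⟩ := h
  refine ⟨fun j => ⟨expd a0 l (f j : ℕ), expd_bound hl hln (f j).2⟩, ?_, ?_⟩
  · intro j k hjk
    have := hmono hjk
    rw [Fin.lt_def] at this ⊢
    exact expd_lt this
  · intro j k
    rw [← hiff j k]
    have key : ∀ j : Fin m, (sigOf l a0 k0 σ (f j) : ℕ) =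
        col k0 l ((σ ⟨expd a0 l (f j : ℕ), expd_bound hl hln (f j).2⟩ : ℕ)) := by
      intro j
      rw [sigOf_apply σ hl hln ha hk hB, pf, dif_pos (expd_bound hl hln (f j).2)]
    rw [Fin.lt_def, Fin.lt_def, key j, key k]
    by_cases hjk : (f j : ℕ) = (f k : ℕ)
    · have e : (⟨expd a0 l (f j : ℕ), expd_bound hl hln (f j).2⟩ : Fin n) =
          ⟨expd a0 l (f k : ℕ), expd_bound hl hln (f k).2⟩ := by
        apply Fin.ext
        show expd a0 l (f j : ℕ) = expd a0 l (f k : ℕ)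
        rw [hjk]
      show (σ ⟨expd a0 l (f j : ℕ), expd_bound hl hln (f j).2⟩ : ℕ) <
          (σ ⟨expd a0 l (f k : ℕ), expd_bound hl hln (f k).2⟩ : ℕ) ↔ _
      rw [e]
      exact iff_of_false (lt_irrefl _) (lt_irrefl _)
    · rw [col_lt_iff hl]
      intro ⟨hwj, hwk⟩
      have e1 := (hB _ (expd_bound hl hln (f j).2)).2 (by rw [pf, dif_pos]; exact hwj)
      have e2 := (hB _ (expd_bound hl hln (f k).2)).2 (by rw [pf, dif_pos]; exact hwk)
      have := (expd_window_iff hl ((f j : ℕ))).1 e1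
      have := (expd_window_iff hl ((f k : ℕ))).1 e2
      omega

end Transfer2
section MainC

variable {n l a0 k0 m : ℕ} (σ : Equiv.Perm (Fin n)) (τ : Equiv.Perm (Fin m))

lemma expd_self (x l : ℕ) : expd x l x = x := by unfold expd; simp

lemma contains_main (hτ : ClusterFree τ) (hl2 : 2 ≤ l) (hlm : l ≤ m)
    (hln : l ≤ n) (ha : a0 + l ≤ n) (hk : k0 + l ≤ n) (hB : BlockAt n a0 k0 l σ)
    (h : Contains ⇑σ ⇑τ) :
    Contains ⇑(betaOf l a0 k0 σ) ⇑τ ∨ Contains ⇑(sigOf l a0 k0 σ) ⇑τ := by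
  classical
  have hl : 1 ≤ l := by omega
  obtain ⟨f, hmono, hiff⟩ := h
  set J : Finset (Fin m) :=
    Finset.univ.filter (fun j => a0 ≤ (f j : ℕ) ∧ (f j : ℕ) < a0 + l) with hJ
  have hmemJ : ∀ j : Fin m, j ∈ J ↔ (k0 ≤ (σ (f j) : ℕ) ∧ (σ (f j) : ℕ) < k0 + l) := by
    intro j
    rw [hJ, Finset.mem_filter]
    have := hB ((f j : ℕ)) (f j).2
    rw [pf_coe] at this
    constructor
    · intro hj; exact this.1 hj.2
    · intro hj; exact ⟨Finset.mem_univ _, this.2 hj⟩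
  by_cases hc : J.card ≤ 1
  · right
    have hcard := Finset.card_le_one.mp hc
    refine ⟨fun j => ⟨col a0 l (f j : ℕ), col_bound hl (f j).2 ha⟩, ?_, ?_⟩
    · intro j k hjk
      have hfjk : (f j : ℕ) < (f k : ℕ) := by
        have := hmono hjk; rwa [Fin.lt_def] at this
      rw [Fin.lt_def]
      show col a0 l (f j : ℕ) < col a0 l (f k : ℕ)
      rw [col_lt_iff hl]
      · exact hfjk
      · rintro ⟨w1, w2⟩
        have hjJ : j ∈ J := by rw [hJ, Finset.mem_filter]; exact ⟨Finset.mem_univ _, w1⟩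
        have hkJ : k ∈ J := by rw [hJ, Finset.mem_filter]; exact ⟨Finset.mem_univ _, w2⟩
        have := hcard j hjJ k hkJ
        rw [this] at hjk
        exact lt_irrefl _ hjk
    · intro j k
      rw [← hiff j k]
      have key : ∀ j : Fin m,
          (sigOf l a0 k0 σ ⟨col a0 l (f j : ℕ), col_bound hl (f j).2 ha⟩ : ℕ) =
            col k0 l ((σ (f j)) : ℕ) := by
        intro j
        rw [sigOf_apply σ hl hln ha hk hB]
        show col k0 l (pf σ (expd a0 l (col a0 l (f j : ℕ)))) = _
        by_cases hw : a0 ≤ (f j : ℕ) ∧ (f j : ℕ) < a0 + l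
        · have h1 : col a0 l (f j : ℕ) = a0 := (col_eq_self_iff hl).1 hw
          rw [h1, expd_self]
          have h3 : k0 ≤ pf σ a0 ∧ pf σ a0 < k0 + l := (hB a0 (by omega)).1 (by omega)
          have h4 := (hB ((f j : ℕ)) (f j).2).1 hw
          rw [pf_coe] at h4
          rw [(col_eq_self_iff hl).1 h3, (col_eq_self_iff hl).1 h4]
        · rw [expd_col hl hw, pf_coe]
      show (sigOf l a0 k0 σ ⟨col a0 l (f j : ℕ), col_bound hl (f j).2 ha⟩ : Fin (n - l + 1)) <
          (sigOf l a0 k0 σ ⟨col a0 l (f k : ℕ), col_bound hl (f k).2 ha⟩ : Fin (n - l + 1)) ↔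
          σ (f j) < σ (f k)
      rw [Fin.lt_def, Fin.lt_def, key j, key k]
      by_cases hjk : f j = f k
      · rw [hjk]
        exact iff_of_false (lt_irrefl _) (lt_irrefl _)
      · exact col_lt_iff hl (by
          rintro ⟨w1, w2⟩
          exact hjk (by rw [hcard j ((hmemJ j).2 w1) k ((hmemJ k).2 w2)]))
  · push_neg at hc
    have hc2 : 2 ≤ J.card := hc
    set P : Finset ℕ := J.image (fun j : Fin m => (j : ℕ)) with hP
    set V : Finset ℕ := J.image (fun j : Fin m => (τ j : ℕ)) with hV
    have hPc : P.card = J.card := Finset.card_image_of_injective _ Fin.val_injective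
    have hVc : V.card = J.card := Finset.card_image_of_injective _
      (fun a b hab => τ.injective (Fin.ext hab))
    have hJne : J.Nonempty := Finset.card_pos.mp (by omega)
    have hPne : P.Nonempty := hJne.image _
    have hVne : V.Nonempty := hJne.image _
    have hPconv : ∀ x ∈ P, ∀ y ∈ P, ∀ z, x ≤ z → z ≤ y → z ∈ P := by
      intro x hx y hy z hxz hzy
      rw [hP, Finset.mem_image] at hx hy ⊢
      obtain ⟨j1, hj1, rfl⟩ := hx
      obtain ⟨j2, hj2, rfl⟩ := hy
      have hz : z < m := lt_of_le_of_lt hzy j2.2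
      refine ⟨⟨z, hz⟩, ?_, rfl⟩
      have hle1 : f j1 ≤ f ⟨z, hz⟩ := hmono.monotone (by rw [Fin.le_def]; exact hxz)
      have hle2 : f ⟨z, hz⟩ ≤ f j2 := hmono.monotone (by rw [Fin.le_def]; exact hzy)
      rw [Fin.le_def] at hle1 hle2
      rw [hJ, Finset.mem_filter] at hj1 hj2 ⊢
      exact ⟨Finset.mem_univ _, by omega, by omega⟩
    have hVconv : ∀ x ∈ V, ∀ y ∈ V, ∀ z, x ≤ z → z ≤ y → z ∈ V := by
      intro x hx y hy z hxz hzy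
      rw [hV, Finset.mem_image] at hx hy ⊢
      obtain ⟨j1, hj1, rfl⟩ := hx
      obtain ⟨j2, hj2, rfl⟩ := hy
      have hz : z < m := lt_of_le_of_lt hzy (τ j2).2
      set jz : Fin m := τ.symm ⟨z, hz⟩ with hjz
      have hτjz : (τ jz : ℕ) = z := by rw [hjz, Equiv.apply_symm_apply]
      refine ⟨jz, ?_, hτjz⟩
      rw [hmemJ]
      by_contra hw
      have hv1 := (hmemJ j1).1 hj1
      have hv2 := (hmemJ j2).1 hj2
      rcases (by omega : (σ (f jz) : ℕ) < k0 ∨ k0 + l ≤ (σ (f jz) : ℕ)) with hlo | hhi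
      · have : σ (f jz) < σ (f j1) := by rw [Fin.lt_def]; omega
        have := (hiff jz j1).1 this
        rw [Fin.lt_def, hτjz] at this
        omega
      · have : σ (f j2) < σ (f jz) := by rw [Fin.lt_def]; omega
        have := (hiff j2 jz).1 this
        rw [Fin.lt_def, hτjz] at this
        omega
    obtain ⟨hPeq, hPcard⟩ := convex_finset_eq_Icc P hPne hPconv
    obtain ⟨hVeq, hVcard⟩ := convex_finset_eq_Icc V hVne hVconv
    have hPlt : ∀ x ∈ P, x < m := by
      intro x hx
      rw [hP, Finset.mem_image] at hx
      obtain ⟨j, _, rfl⟩ := hx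
      exact j.2
    have hVlt : ∀ x ∈ V, x < m := by
      intro x hx
      rw [hV, Finset.mem_image] at hx
      obtain ⟨j, _, rfl⟩ := hx
      exact (τ j).2
    have hmax_lt : P.max' hPne < m := hPlt _ (P.max'_mem hPne)
    have hvmax_lt : V.max' hVne < m := hVlt _ (V.max'_mem hVne)
    have hcm : J.card ≤ m := by
      have := Finset.card_le_univ J
      simpa using this
    by_cases hcm2 : J.card = m
    · left
      have hJuniv : J = Finset.univ := Finset.eq_univ_of_card J (by rw [hcm2]; simp)
      have hall : ∀ j : Fin m, a0 ≤ (f j : ℕ) ∧ (f j : ℕ) < a0 + l := by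
        intro j
        have : j ∈ J := hJuniv ▸ Finset.mem_univ j
        rw [hJ, Finset.mem_filter] at this
        exact this.2
      refine ⟨fun j => ⟨(f j : ℕ) - a0, by have := (hall j).2; omega⟩, ?_, ?_⟩
      · intro j k hjk
        have hfjk : (f j : ℕ) < (f k : ℕ) := by
          have := hmono hjk; rwa [Fin.lt_def] at this
        rw [Fin.lt_def]
        show (f j : ℕ) - a0 < (f k : ℕ) - a0
        have := (hall j).1
        omega
      · intro j k
        rw [← hiff j k]
        have key : ∀ j : Fin m,
            (betaOf l a0 k0 σ ⟨(f j : ℕ) - a0, by have := (hall j).2; omega⟩ : ℕ) =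
              (σ (f j) : ℕ) - k0 := by
          intro j
          rw [betaOf_apply σ ha hB]
          show pf σ (a0 + ((f j : ℕ) - a0)) - k0 = _
          rw [show a0 + ((f j : ℕ) - a0) = (f j : ℕ) from by have := (hall j).1; omega,
            pf_coe]
        show (betaOf l a0 k0 σ ⟨(f j : ℕ) - a0, by have := (hall j).2; omega⟩ : Fin l) <
            (betaOf l a0 k0 σ ⟨(f k : ℕ) - a0, by have := (hall k).2; omega⟩ : Fin l) ↔
            σ (f j) < σ (f k)
        rw [Fin.lt_def, Fin.lt_def, key j, key k]
        have hvj := (hmemJ j).1 (hJuniv ▸ Finset.mem_univ j)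
        have hvk := (hmemJ k).1 (hJuniv ▸ Finset.mem_univ k)
        omega
    · exfalso
      apply hτ J.card (P.min' hPne + 1) (V.min' hVne + 1) hc2 (by omega) (by omega)
        (by omega)
      unfold ClusterAt
      have hfilter : (Finset.univ.filter fun i : Fin m =>
          P.min' hPne + 1 ≤ (i : ℕ) + 1 ∧ (i : ℕ) + 1 < P.min' hPne + 1 + J.card) = J := by
        ext i
        simp only [Finset.mem_filter, Finset.mem_univ, true_and]
        constructor
        · rintro ⟨h1, h2⟩
          have hiP : (i : ℕ) ∈ P := by
            rw [hPeq, Finset.mem_Icc]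
            omega
          rw [hP, Finset.mem_image] at hiP
          obtain ⟨j, hjJ, hji⟩ := hiP
          rwa [← Fin.ext hji]
        · intro hiJ
          have hiP : (i : ℕ) ∈ P := Finset.mem_image_of_mem _ hiJ
          rw [hPeq, Finset.mem_Icc] at hiP
          omega
      rw [hfilter]
      ext v
      simp only [Finset.mem_image, Finset.mem_Ico]
      constructor
      · rintro ⟨i, hiJ, rfl⟩
        have hiV : (τ i : ℕ) ∈ V := Finset.mem_image_of_mem _ hiJ
        rw [hVeq, Finset.mem_Icc] at hiV
        omega
      · intro hv
        have : v - 1 ∈ V := by rw [hVeq, Finset.mem_Icc]; omega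
        rw [hV, Finset.mem_image] at this
        obtain ⟨i, hiJ, hiv⟩ := this
        exact ⟨i, hiJ, by omega⟩

end MainC
section Backward

def bFun (βf σf : ℕ → ℕ) (a0 k0 l : ℕ) : ℕ → ℕ := fun p =>
  if p < a0 then expd k0 l (σf p)
  else if p < a0 + l then k0 + βf (p - a0)
  else expd k0 l (σf (p - (l - 1)))

lemma expd_not_window {k0 l v : ℕ} (hl : 1 ≤ l) (hv : v ≠ k0) :
    ¬(k0 ≤ expd k0 l v ∧ expd k0 l v < k0 + l) := by
  unfold expd; split_ifs <;> omega

variable {n l a0 k0 : ℕ} (β : Equiv.Perm (Fin l)) (σ' : Equiv.Perm (Fin (n - l + 1)))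

lemma bFun_cond1 (hl : 1 ≤ l) (hln : l ≤ n) (ha : a0 + l ≤ n) (hk : k0 + l ≤ n) :
    ∀ p < n, bFun (pf β) (pf σ') a0 k0 l p < n := by
  intro p hp
  unfold bFun
  split_ifs with h1 h2
  · exact expd_bound hl hln (pf_lt σ' (by omega))
  · have := pf_lt β (show p - a0 < l by omega)
    omega
  · exact expd_bound hl hln (pf_lt σ' (by omega))

lemma bFun_inj (hl : 1 ≤ l) (hln : l ≤ n) (ha : a0 + l ≤ n) (hk : k0 + l ≤ n)
    (hs : pf σ' a0 = k0) :
    ∀ p < n, ∀ q < n, bFun (pf β) (pf σ') a0 k0 l p = bFun (pf β) (pf σ') a0 k0 l q →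
      p = q := by
  have ha0N : a0 < n - l + 1 := by omega
  have key : ∀ i < n - l + 1, i ≠ a0 → pf σ' i ≠ k0 := by
    intro i hi hia heq
    exact hia (pf_inj σ' hi ha0N (by rw [heq, hs]))
  intro p hp q hq h
  unfold bFun at h
  split_ifs at h with h1 h2 h3 h4 h5 h6 h7
  · exact pf_inj σ' (by omega) (by omega) (expd_inj h)
  · exfalso
    exact expd_not_window hl (key p (by omega) (by omega)) (by
      constructor <;> [omega; (have := pf_lt β (show q - a0 < l by omega); omega)])
  · have := pf_inj σ' (show p < n - l + 1 by omega) (show q - (l-1) < n - l + 1 by omega)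
      (expd_inj h)
    omega
  · exfalso
    exact expd_not_window hl (key q (by omega) (by omega)) (by
      constructor <;> [omega; (have := pf_lt β (show p - a0 < l by omega); omega)])
  · have := pf_inj β (show p - a0 < l by omega) (show q - a0 < l by omega) (by omega)
    omega
  · exfalso
    exact expd_not_window hl (key (q - (l-1)) (by omega) (by omega)) (by
      constructor <;> [omega; (have := pf_lt β (show p - a0 < l by omega); omega)])
  · have := pf_inj σ' (show p - (l-1) < n - l + 1 by omega) (show q < n - l + 1 by omega)
      (expd_inj h)
    omega
  · exfalso
    exact expd_not_window hl (key (p - (l-1)) (by omega) (by omega)) (by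
      constructor <;> [omega; (have := pf_lt β (show q - a0 < l by omega); omega)])
  · have := pf_inj σ' (show p - (l-1) < n - l + 1 by omega) (show q - (l-1) < n - l + 1 by omega)
      (expd_inj h)
    omega

noncomputable def bPerm (n l a0 k0 : ℕ) (β : Equiv.Perm (Fin l))
    (σ' : Equiv.Perm (Fin (n - l + 1))) : Equiv.Perm (Fin n) :=
  mkPerm n (bFun (pf β) (pf σ') a0 k0 l)

variable (hl : 1 ≤ l) (hln : l ≤ n) (ha : a0 + l ≤ n) (hk : k0 + l ≤ n)
  (hs : pf σ' a0 = k0)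

include hl hln ha hk hs

lemma bPerm_pf : ∀ p < n, pf (bPerm n l a0 k0 β σ') p = bFun (pf β) (pf σ') a0 k0 l p := by
  intro p hp
  rw [pf, dif_pos hp]
  exact mkPerm_apply (bFun_cond1 β σ' hl hln ha hk) (bFun_inj β σ' hl hln ha hk hs) _

lemma bPerm_blockAt : BlockAt n a0 k0 l (bPerm n l a0 k0 β σ') := by
  have ha0N : a0 < n - l + 1 := by omega
  have key : ∀ i < n - l + 1, i ≠ a0 → pf σ' i ≠ k0 := by
    intro i hi hia heq
    exact hia (pf_inj σ' hi ha0N (by rw [heq, hs]))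
  intro p hp
  rw [bPerm_pf β σ' hl hln ha hk hs p hp]
  unfold bFun
  split_ifs with h1 h2
  · have := expd_not_window hl (key p (by omega) (by omega)) (k0 := k0) (l := l)
    constructor
    · omega
    · intro hw; exact absurd hw this
  · have := pf_lt β (show p - a0 < l by omega)
    omega
  · have := expd_not_window hl (key (p - (l-1)) (by omega) (by omega)) (k0 := k0) (l := l)
    constructor
    · omega
    · intro hw; exact absurd hw this

lemma betaOf_bPerm : betaOf l a0 k0 (bPerm n l a0 k0 β σ') = β := by
  apply Equiv.ext
  intro i
  apply Fin.ext
  rw [betaOf_apply _ ha (bPerm_blockAt β σ' hl hln ha hk hs),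
    bPerm_pf β σ' hl hln ha hk hs (a0 + i) (by have := i.2; omega)]
  unfold bFun
  rw [if_neg (by omega), if_pos (by have := i.2; omega)]
  simp [pf, i.2]

lemma sigOf_bPerm : sigOf l a0 k0 (bPerm n l a0 k0 β σ') = σ' := by
  have ha0N : a0 < n - l + 1 := by omega
  have key : ∀ i < n - l + 1, i ≠ a0 → pf σ' i ≠ k0 := by
    intro i hi hia heq
    exact hia (pf_inj σ' hi ha0N (by rw [heq, hs]))
  apply Equiv.ext
  intro i
  apply Fin.ext
  rw [sigOf_apply _ hl hln ha hk (bPerm_blockAt β σ' hl hln ha hk hs),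
    bPerm_pf β σ' hl hln ha hk hs (expd a0 l i) (expd_bound hl hln i.2)]
  have hi := i.2
  rcases lt_trichotomy (i : ℕ) a0 with hlt | heq | hgt
  · have he : expd a0 l (i : ℕ) = (i : ℕ) := by unfold expd; rw [if_pos (by omega)]
    rw [he]
    unfold bFun
    rw [if_pos hlt, col_expd hl (key i hi (by omega))]
    rw [pf, dif_pos hi]
  · have he : expd a0 l (i : ℕ) = a0 := by rw [heq, expd_self]
    rw [he]
    unfold bFun
    rw [if_neg (by omega), if_pos (by omega)]
    have hb := pf_lt β (show a0 - a0 < l by omega)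
    rw [(col_eq_self_iff hl).1 (by omega)]
    rw [← pf_coe σ' i, heq, hs]
  · have he : expd a0 l (i : ℕ) = (i : ℕ) + (l - 1) := by unfold expd; rw [if_neg (by omega)]
    rw [he]
    unfold bFun
    rw [if_neg (by omega), if_neg (by omega)]
    rw [show (i : ℕ) + (l - 1) - (l - 1) = (i : ℕ) from by omega,
      col_expd hl (key i hi (by omega))]
    rw [pf, dif_pos hi]

end Backward

section Reconstruct

variable {n l a0 k0 : ℕ} (σ : Equiv.Perm (Fin n))

lemma sigOf_a0 (hl : 1 ≤ l) (hln : l ≤ n) (ha : a0 + l ≤ n) (hk : k0 + l ≤ n)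
    (hB : BlockAt n a0 k0 l σ) (ha0N : a0 < n - l + 1) :
    pf (sigOf l a0 k0 σ) a0 = k0 := by
  rw [pf, dif_pos ha0N]
  rw [show (⟨a0, ha0N⟩ : Fin (n - l + 1)) = ⟨a0, ha0N⟩ from rfl]
  rw [sigOf_apply σ hl hln ha hk hB]
  show col k0 l (pf σ (expd a0 l a0)) = k0
  rw [expd_self]
  exact (col_eq_self_iff hl).1 ((hB a0 (by omega)).1 (by omega))

lemma bPerm_reconstruct (hl : 1 ≤ l) (hln : l ≤ n) (ha : a0 + l ≤ n) (hk : k0 + l ≤ n)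
    (hB : BlockAt n a0 k0 l σ) :
    bPerm n l a0 k0 (betaOf l a0 k0 σ) (sigOf l a0 k0 σ) = σ := by
  have ha0N : a0 < n - l + 1 := by omega
  have hs := sigOf_a0 σ hl hln ha hk hB ha0N
  apply Equiv.ext
  intro p
  apply Fin.ext
  rw [show ((bPerm n l a0 k0 (betaOf l a0 k0 σ) (sigOf l a0 k0 σ)) p : ℕ) =
    pf (bPerm n l a0 k0 (betaOf l a0 k0 σ) (sigOf l a0 k0 σ)) (p : ℕ) from (pf_coe _ p).symm]
  rw [bPerm_pf _ _ hl hln ha hk hs (p : ℕ) p.2, ← pf_coe σ p]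
  have hp := p.2
  unfold bFun
  split_ifs with h1 h2
  · rw [pf, dif_pos (show (p : ℕ) < n - l + 1 by omega)]
    rw [sigOf_apply σ hl hln ha hk hB]
    show expd k0 l (col k0 l (pf σ (expd a0 l (p : ℕ)))) = _
    rw [show expd a0 l (p : ℕ) = (p : ℕ) from by unfold expd; rw [if_pos (by omega)]]
    exact expd_col hl (fun hw => by have := (hB (p : ℕ) hp).2 hw; omega)
  · rw [pf, dif_pos (show (p : ℕ) - a0 < l by omega)]
    rw [betaOf_apply σ ha hB]
    show k0 + (pf σ (a0 + ((p : ℕ) - a0)) - k0) = _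
    rw [show a0 + ((p : ℕ) - a0) = (p : ℕ) from by omega]
    have := (hB (p : ℕ) hp).1 (by omega)
    omega
  · rw [pf, dif_pos (show (p : ℕ) - (l - 1) < n - l + 1 by omega)]
    rw [sigOf_apply σ hl hln ha hk hB]
    show expd k0 l (col k0 l (pf σ (expd a0 l ((p : ℕ) - (l - 1))))) = _
    rw [show expd a0 l ((p : ℕ) - (l - 1)) = (p : ℕ) from by unfold expd; rw [if_neg (by omega)]; omega]
    exact expd_col hl (fun hw => by have := (hB (p : ℕ) hp).2 hw; omega)

end Reconstruct
section Count

variable {m : ℕ} (τ : Equiv.Perm (Fin m))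

lemma bPerm_mem (hτ : ClusterFree τ) {l n a0 k0 : ℕ} (hl2 : 2 ≤ l) (hlm : l ≤ m)
    (hln : l ≤ n) (ha : a0 + l ≤ n) (hk : k0 + l ≤ n)
    (β : Equiv.Perm (Fin l)) (σ' : Equiv.Perm (Fin (n - l + 1)))
    (hs : pf σ' a0 = k0) (hβ : Avoids ⇑β ⇑τ) (hσ' : Avoids ⇑σ' ⇑τ) :
    bPerm n l a0 k0 β σ' ∈ ClusterEvent n l (k0 + 1) ∩ AvoidSet n τ := by
  have hl : 1 ≤ l := by omega
  have hB := bPerm_blockAt β σ' hl hln ha hk hs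
  constructor
  · exact ⟨a0 + 1, by omega, by omega,
      (clusterAt_iff_blockAt _ hl ha hk).2 hB⟩
  · intro hcon
    rcases contains_main _ τ hτ hl2 hlm hln ha hk hB hcon with hb | hsg
    · rw [betaOf_bPerm β σ' hl hln ha hk hs] at hb
      exact hβ hb
    · rw [sigOf_bPerm β σ' hl hln ha hk hs] at hsg
      exact hσ' hsg

lemma count_eq (hτ : ClusterFree τ) {l n kk : ℕ}
    (hl2 : 2 ≤ l) (hlm : l ≤ m) (hln : l ≤ n) (hk1 : 1 ≤ kk) (hk2 : kk ≤ n - l + 1) :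
    (ClusterEvent n l kk ∩ AvoidSet n τ).ncard =
      (AvoidSet l τ).ncard * (AvoidSet (n - l + 1) τ).ncard := by
  classical
  have hl : 1 ≤ l := by omega
  set k0 := kk - 1 with hk0
  have hkk : kk = k0 + 1 := by omega
  have hk : k0 + l ≤ n := by omega
  have hk0N : k0 < n - l + 1 := by omega
  rw [← Nat.card_coe_set_eq, ← Nat.card_coe_set_eq, ← Nat.card_coe_set_eq,
    ← Nat.card_prod]
  symm
  apply Nat.card_eq_of_bijective
    (f := fun x : ↥(AvoidSet l τ) × ↥(AvoidSet (n - l + 1) τ) =>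
      (⟨bPerm n l ((x.2.1.symm ⟨k0, hk0N⟩ : Fin (n - l + 1)) : ℕ) k0 x.1.1 x.2.1, by
        have ha0N : ((x.2.1.symm ⟨k0, hk0N⟩ : Fin (n - l + 1)) : ℕ) < n - l + 1 :=
          (x.2.1.symm ⟨k0, hk0N⟩).2
        have hs : pf x.2.1 ((x.2.1.symm ⟨k0, hk0N⟩ : Fin (n - l + 1)) : ℕ) = k0 := by
          rw [pf_coe, Equiv.apply_symm_apply]
        rw [hkk]
        exact bPerm_mem τ hτ hl2 hlm hln (by omega) hk x.1.1 x.2.1 hs x.1.2 x.2.2⟩ :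
        ↥(ClusterEvent n l kk ∩ AvoidSet n τ)))
  constructor
  · rintro ⟨⟨β1, hβ1⟩, ⟨σ1, hσ1⟩⟩ ⟨⟨β2, hβ2⟩, ⟨σ2, hσ2⟩⟩ hxy
    have hval : bPerm n l ((σ1.symm ⟨k0, hk0N⟩ : Fin (n - l + 1)) : ℕ) k0 β1 σ1 =
        bPerm n l ((σ2.symm ⟨k0, hk0N⟩ : Fin (n - l + 1)) : ℕ) k0 β2 σ2 :=
      congrArg Subtype.val hxy
    set a1 := ((σ1.symm ⟨k0, hk0N⟩ : Fin (n - l + 1)) : ℕ) with ha1d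
    set a2 := ((σ2.symm ⟨k0, hk0N⟩ : Fin (n - l + 1)) : ℕ) with ha2d
    have ha1N : a1 < n - l + 1 := (σ1.symm ⟨k0, hk0N⟩).2
    have ha2N : a2 < n - l + 1 := (σ2.symm ⟨k0, hk0N⟩).2
    have hs1 : pf σ1 a1 = k0 := by rw [ha1d, pf_coe, Equiv.apply_symm_apply]
    have hs2 : pf σ2 a2 = k0 := by rw [ha2d, pf_coe, Equiv.apply_symm_apply]
    have hB1 := bPerm_blockAt β1 σ1 hl hln (by omega) hk hs1
    have hB2 := bPerm_blockAt β2 σ2 hl hln (by omega) hk hs2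
    rw [hval] at hB1
    have ha12 : a1 = a2 := blockAt_unique _ hl (by omega) (by omega) hB1 hB2
    have hbeta : β1 = β2 := by
      have e1 := betaOf_bPerm β1 σ1 hl hln (by omega) hk hs1
      have e2 := betaOf_bPerm β2 σ2 hl hln (by omega) hk hs2
      rw [← e1, ← e2, hval, ha12]
    have hsig : σ1 = σ2 := by
      have e1 := sigOf_bPerm β1 σ1 hl hln (by omega) hk hs1
      have e2 := sigOf_bPerm β2 σ2 hl hln (by omega) hk hs2
      rw [← e1, ← e2, hval, ha12]
    simp only [Prod.mk.injEq, Subtype.mk.injEq]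
    exact ⟨hbeta, hsig⟩
  · rintro ⟨σ, hσ⟩
    obtain ⟨a, ha1, ha2, hca⟩ := hσ.1
    set a0 := a - 1 with ha0d
    have ha : a0 + l ≤ n := by omega
    have hca' : ClusterAt l (k0 + 1) (a0 + 1) σ := by
      rw [show k0 + 1 = kk from by omega, show a0 + 1 = a from by omega]
      exact hca
    have hB : BlockAt n a0 k0 l σ := (clusterAt_iff_blockAt σ hl ha hk).1 hca'
    have ha0N : a0 < n - l + 1 := by omega
    have hbav : Avoids ⇑(betaOf l a0 k0 σ) ⇑τ := by
      intro hcb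
      exact hσ.2 (contains_of_beta σ τ hl ha hB hcb)
    have hsav : Avoids ⇑(sigOf l a0 k0 σ) ⇑τ := by
      intro hcs
      exact hσ.2 (contains_of_sig σ τ hl hln ha hk hB hcs)
    refine ⟨⟨⟨betaOf l a0 k0 σ, hbav⟩, ⟨sigOf l a0 k0 σ, hsav⟩⟩, ?_⟩
    apply Subtype.ext
    show bPerm n l (((sigOf l a0 k0 σ).symm ⟨k0, hk0N⟩ : Fin (n - l + 1)) : ℕ) k0 _ _ = σ
    have hs0 : pf (sigOf l a0 k0 σ) a0 = k0 := sigOf_a0 σ hl hln ha hk hB ha0N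
    have hsymm : ((sigOf l a0 k0 σ).symm ⟨k0, hk0N⟩ : Fin (n - l + 1)) = ⟨a0, ha0N⟩ := by
      apply Equiv.symm_apply_eq _ |>.2
      symm
      apply Fin.ext
      show ((sigOf l a0 k0 σ) ⟨a0, ha0N⟩ : ℕ) = k0
      rw [← pf_coe (sigOf l a0 k0 σ) ⟨a0, ha0N⟩]
      exact hs0
    rw [hsymm]
    exact bPerm_reconstruct σ hl hln ha hk hB

end Count
section SmallCounts

lemma strictMono_fin_id {m : ℕ} {f : Fin m → Fin m} (hf : StrictMono f) : ∀ i, f i = i := by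
  have h1 : ∀ k, ∀ i : Fin m, (i : ℕ) = k → k ≤ (f i : ℕ) := by
    intro k
    induction k using Nat.strong_induction_on with
    | _ k ih =>
      intro i hik
      rcases Nat.eq_zero_or_pos k with rfl | hk
      · exact Nat.zero_le _
      · have hj : k - 1 < m := by have := i.2; omega
        have hji : (⟨k - 1, hj⟩ : Fin m) < i := by rw [Fin.lt_def]; simp; omega
        have := ih (k - 1) (by omega) ⟨k - 1, hj⟩ rfl
        have hlt := hf hji
        rw [Fin.lt_def] at hlt
        omega
  have h2 : ∀ k, ∀ i : Fin m, m - 1 - (i : ℕ) = k → (f i : ℕ) ≤ i := by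
    intro k
    induction k using Nat.strong_induction_on with
    | _ k ih =>
      intro i hik
      by_cases htop : (i : ℕ) = m - 1
      · have := (f i).2; omega
      · have hi := i.2
        have hj : (i : ℕ) + 1 < m := by omega
        have hji : i < (⟨(i : ℕ) + 1, hj⟩ : Fin m) := by rw [Fin.lt_def]; simp
        have := ih (m - 1 - ((i : ℕ) + 1)) (by omega) ⟨(i : ℕ) + 1, hj⟩ rfl
        have hlt := hf hji
        rw [Fin.lt_def] at hlt
        simp at this
        omega
  intro i
  have := h1 (i : ℕ) i rfl
  have := h2 (m - 1 - (i : ℕ)) i rfl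
  exact Fin.ext (by omega)

lemma contains_self_iff {m : ℕ} (σ τ : Equiv.Perm (Fin m)) : Contains ⇑σ ⇑τ ↔ σ = τ := by
  constructor
  · rintro ⟨f, hf, hiff⟩
    have hfid := strictMono_fin_id hf
    have hiff' : ∀ j k : Fin m, σ j < σ k ↔ τ j < τ k := by
      intro j k
      have := hiff j k
      rwa [hfid j, hfid k] at this
    have hmono : StrictMono (⇑σ ∘ ⇑τ.symm) := by
      intro u v huv
      show σ (τ.symm u) < σ (τ.symm v)
      rw [hiff' (τ.symm u) (τ.symm v), Equiv.apply_symm_apply, Equiv.apply_symm_apply]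
      exact huv
    have hid := strictMono_fin_id hmono
    apply Equiv.ext
    intro x
    have := hid (τ x)
    simpa using this
  · rintro rfl
    exact ⟨id, strictMono_id, fun j k => Iff.rfl⟩

lemma avoidSet_univ {l m : ℕ} (τ : Equiv.Perm (Fin m)) (hlm : l < m) :
    AvoidSet l τ = Set.univ := by
  ext σ
  simp only [AvoidSet, Set.mem_setOf_eq, Set.mem_univ, iff_true]
  rintro ⟨f, hf, -⟩
  have := Fintype.card_le_of_injective f hf.injective
  simp at this
  omega

lemma card_perm_fin (l : ℕ) : Nat.card (Equiv.Perm (Fin l)) = l.factorial := by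
  rw [Nat.card_eq_fintype_card, Fintype.card_perm, Fintype.card_fin]

lemma avoidSet_card_lt {l m : ℕ} (τ : Equiv.Perm (Fin m)) (hlm : l < m) :
    (AvoidSet l τ).ncard = l.factorial := by
  rw [avoidSet_univ τ hlm, Set.ncard_univ, card_perm_fin]

lemma avoidSet_card_eq {m : ℕ} (τ : Equiv.Perm (Fin m)) :
    (AvoidSet m τ).ncard = m.factorial - 1 := by
  have : AvoidSet m τ = Set.univ \ {τ} := by
    ext σ
    simp only [AvoidSet, Set.mem_setOf_eq, Set.mem_diff, Set.mem_univ, Set.mem_singleton_iff,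
      true_and]
    rw [Avoids, contains_self_iff]
  rw [this, Set.ncard_diff_singleton_of_mem (Set.mem_univ τ), Set.ncard_univ, card_perm_fin]

lemma avoidSet_nonempty {m : ℕ} (τ : Equiv.Perm (Fin m)) (hm : 2 ≤ m) (n : ℕ) :
    0 < (AvoidSet n τ).ncard := by
  rw [Set.ncard_pos (Set.toFinite _)]
  rcases Nat.eq_zero_or_pos n with rfl | hn
  · refine ⟨1, ?_⟩
    rintro ⟨f, -, -⟩
    exact (f ⟨0, by omega⟩).elim0
  · by_cases ht : StrictMono ⇑τ
    · refine ⟨mkPerm n (fun p => n - 1 - p), ?_⟩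
      rintro ⟨f, hf, hiff⟩
      have hcond1 : ∀ i < n, n - 1 - i < n := by intro i hi; omega
      have hcond2 : ∀ i < n, ∀ j < n, n - 1 - i = n - 1 - j → i = j := by
        intro i hi j hj h; omega
      have h01 : (⟨0, by omega⟩ : Fin m) < ⟨1, by omega⟩ := by rw [Fin.lt_def]; simp
      have hτ01 : τ ⟨0, by omega⟩ < τ ⟨1, by omega⟩ := ht h01
      have := (hiff ⟨0, by omega⟩ ⟨1, by omega⟩).2 hτ01
      rw [Fin.lt_def, mkPerm_apply hcond1 hcond2, mkPerm_apply hcond1 hcond2] at this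
      have hff := hf h01
      rw [Fin.lt_def] at hff
      have b1 := (f ⟨0, by omega⟩).2
      have b2 := (f ⟨1, by omega⟩).2
      omega
    · refine ⟨1, ?_⟩
      rintro ⟨f, hf, hiff⟩
      apply ht
      intro j k hjk
      have := (hiff j k).1 (by simpa using hf hjk)
      exact this

end SmallCounts
section Limits

open Filter

lemma main_tendsto {m : ℕ} (τ : Equiv.Perm (Fin m)) (hm : 2 ≤ m) (hτ : ClusterFree τ)
    {L : ℝ} (hL : 0 < L)
    (hconv : Tendsto (fun n : ℕ => ((AvoidSet (n + 1) τ).ncard : ℝ) / ((AvoidSet n τ).ncard : ℝ))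
      atTop (nhds L))
    {l : ℕ} (hl2 : 2 ≤ l) (hlm : l ≤ m) (k : ℕ → ℕ) (hk : ∀ n, 1 ≤ k n ∧ k n ≤ n - l + 1) :
    Tendsto (fun n : ℕ => ((ClusterEvent n l (k n) ∩ AvoidSet n τ).ncard : ℝ) /
      ((AvoidSet n τ).ncard : ℝ)) atTop
      (nhds (((AvoidSet l τ).ncard : ℝ) / L ^ (l - 1))) := by
  set A : ℕ → ℝ := fun n => ((AvoidSet n τ).ncard : ℝ) with hA
  have hApos : ∀ n, 0 < A n := by
    intro n
    have := avoidSet_nonempty τ hm n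
    show (0 : ℝ) < ((AvoidSet n τ).ncard : ℝ)
    exact_mod_cast this
  have hstep : ∀ d : ℕ, Tendsto (fun n => A (n + d) / A n) atTop (nhds (L ^ d)) := by
    intro d
    induction d with
    | zero =>
      rw [pow_zero]
      apply Tendsto.congr (f₁ := fun _ : ℕ => (1 : ℝ))
      · intro n
        rw [Nat.add_zero, div_self (hApos n).ne']
      · exact tendsto_const_nhds
    | succ d ih =>
      have heq : (fun n => A (n + (d + 1)) / A n) =
          fun n => (A (n + d + 1) / A (n + d)) * (A (n + d) / A n) := by
        funext n
        rw [div_mul_div_comm, mul_comm (A (n + d + 1)) (A (n + d)),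
          mul_div_mul_left _ _ (hApos (n + d)).ne', ← Nat.add_assoc]
      rw [heq, pow_succ, mul_comm (L ^ d) L]
      exact (hconv.comp (tendsto_add_atTop_nat d)).mul ih
  set d := l - 1 with hd
  have h2 : Tendsto (fun n => A ((n - d) + d) / A (n - d)) atTop (nhds (L ^ d)) :=
    (hstep d).comp (tendsto_sub_atTop_nat d)
  have h3 := h2.inv₀ (pow_pos hL d).ne'
  have h4 := h3.const_mul ((AvoidSet l τ).ncard : ℝ)
  rw [show ((AvoidSet l τ).ncard : ℝ) * (L ^ d)⁻¹ = ((AvoidSet l τ).ncard : ℝ) / L ^ d from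
    (div_eq_mul_inv _ _).symm] at h4
  apply h4.congr'
  filter_upwards [eventually_ge_atTop l] with n hn
  have hnd : n - d + d = n := by omega
  rw [hnd]
  have hcount := count_eq τ hτ hl2 hlm hn (hk n).1 (hk n).2
  have hcast : ((ClusterEvent n l (k n) ∩ AvoidSet n τ).ncard : ℝ) =
      ((AvoidSet l τ).ncard : ℝ) * ((AvoidSet (n - l + 1) τ).ncard : ℝ) := by
    rw [hcount]; push_cast; ring
  rw [hcast, show n - l + 1 = n - d from by omega]
  rw [inv_div, mul_div_assoc]

end Limits
end AuxCluster

/-- for cluster-free `τ`, the limit equals `l!/L^{l-1}` when `2 ≤ l < m`,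
and `(m!-1)/L^{m-1}` when `l = m`. -/
theorem avoid_cluster_limit_clusterFree_values (m : ℕ) (hm : 2 ≤ m) (τ : Equiv.Perm (Fin m))
    (hτ : ClusterFree τ) (L : ℝ) (hL : 0 < L)
    (hconv : Filter.Tendsto
      (fun n : ℕ => ((AvoidSet (n + 1) τ).ncard : ℝ) / ((AvoidSet n τ).ncard : ℝ))
      Filter.atTop (nhds L))
    (l : ℕ) (k : ℕ → ℕ) (hk : ∀ n : ℕ, 1 ≤ k n ∧ k n ≤ n - l + 1) :
    (2 ≤ l → l < m →
      Filter.Tendsto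
        (fun n : ℕ => ((ClusterEvent n l (k n) ∩ AvoidSet n τ).ncard : ℝ) /
          ((AvoidSet n τ).ncard : ℝ)) Filter.atTop
        (nhds ((Nat.factorial l : ℝ) / L ^ (l - 1)))) ∧
    (l = m →
      Filter.Tendsto
        (fun n : ℕ => ((ClusterEvent n l (k n) ∩ AvoidSet n τ).ncard : ℝ) /
          ((AvoidSet n τ).ncard : ℝ)) Filter.atTop
        (nhds (((Nat.factorial m : ℝ) - 1) / L ^ (m - 1)))) := by
  constructor
  · intro hl2 hlt
    have h := AuxCluster.main_tendsto τ hm hτ hL hconv hl2 (le_of_lt hlt) k hk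
    rwa [AuxCluster.avoidSet_card_lt τ hlt] at h
  · intro heq
    subst heq
    have h := AuxCluster.main_tendsto τ hm hτ hL hconv hm (le_refl l) k hk
    rw [AuxCluster.avoidSet_card_eq τ] at h
    have hcast : ((l.factorial - 1 : ℕ) : ℝ) = (l.factorial : ℝ) - 1 := by
      have h1 : 1 ≤ l.factorial := l.factorial_pos
      push_cast [Nat.cast_sub h1]
      ring
    rwa [hcast] at h
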